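/- The pointwise transformation A ↦ Â on block matrices A = [[A_⊥⊥, A_⊥∥],[A_∥⊥, A_∥∥]] (with A_⊥⊥ an invertible scalar or invertible square block), defined by Â = [[1, 0],[A_∥⊥, A_∥∥]] · [[A_⊥⊥, A_⊥∥],[0, 1]]^{-1} = [[A_⊥⊥^{-1}, −A_⊥⊥^{-1}A_⊥∥],[A_∥⊥A_⊥⊥^{-1}, A_∥∥ − A_∥⊥A_⊥⊥^{-1}A_⊥∥]], is well-defined on the set of matrices A ∈ ℂ^{(n+1)×(n+1)} satisfying the strict accretivity condition Re(Aξ·ξ̄) ≥ κ|ξ|² for some κ > 0, is a self-inverse bijection of this set onto itself (with possibly different accretivity constants controlled by κ and ‖A‖). -/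

import Mathlib

open Matrix

noncomputable section

/-- The pointwise transformation `A ↦ Â` on `(1+n)×(1+n)` block matrices (indices
`Unit ⊕ Fin n`, the first block being the `⊥` direction):
`Â = [[A⊥⊥⁻¹, -A⊥⊥⁻¹A⊥∥],[A∥⊥A⊥⊥⁻¹, A∥∥ - A∥⊥A⊥⊥⁻¹A⊥∥]]`. -/
def hatMatrix {n : ℕ} (A : Matrix (Unit ⊕ Fin n) (Unit ⊕ Fin n) ℂ) :
    Matrix (Unit ⊕ Fin n) (Unit ⊕ Fin n) ℂ :=
  Matrix.fromBlocks (A.toBlocks₁₁)⁻¹ (-(A.toBlocks₁₁)⁻¹ * A.toBlocks₁₂)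
    (A.toBlocks₂₁ * (A.toBlocks₁₁)⁻¹)
    (A.toBlocks₂₂ - A.toBlocks₂₁ * (A.toBlocks₁₁)⁻¹ * A.toBlocks₁₂)

/-- Strict accretivity with constant `κ`: `Re(Aξ·ξ̄) ≥ κ|ξ|²` for all `ξ ∈ ℂ^{1+n}`. -/
def StrictlyAccretive (n : ℕ) (κ : ℝ) (A : Matrix (Unit ⊕ Fin n) (Unit ⊕ Fin n) ℂ) : Prop :=
  ∀ ξ : (Unit ⊕ Fin n) → ℂ,
    κ * ∑ i, ‖ξ i‖ ^ 2 ≤ (dotProduct (A.mulVec ξ) (star ξ)).re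

variable {n : ℕ} (A : Matrix (Unit ⊕ Fin n) (Unit ⊕ Fin n) ℂ)

lemma unit_inv_apply (M : Matrix Unit Unit ℂ) : M⁻¹ = Matrix.of (fun _ _ => (M () ())⁻¹) := by
  rw [Matrix.inv_def, Matrix.adjugate_subsingleton, Matrix.det_unique]
  ext i j
  simp [Ring.inverse_eq_inv']

lemma hat_ll (i j : Unit) : hatMatrix A (Sum.inl i) (Sum.inl j) = (A (Sum.inl ()) (Sum.inl ()))⁻¹ := by
  simp [hatMatrix, unit_inv_apply, Matrix.toBlocks₁₁]

lemma hat_lr (i : Unit) (j : Fin n) :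
    hatMatrix A (Sum.inl i) (Sum.inr j) = -((A (Sum.inl ()) (Sum.inl ()))⁻¹ * A (Sum.inl ()) (Sum.inr j)) := by
  simp [hatMatrix, unit_inv_apply, Matrix.toBlocks₁₁, Matrix.toBlocks₁₂, Matrix.mul_apply]

lemma hat_rl (i : Fin n) (j : Unit) :
    hatMatrix A (Sum.inr i) (Sum.inl j) = A (Sum.inr i) (Sum.inl ()) * (A (Sum.inl ()) (Sum.inl ()))⁻¹ := by
  simp [hatMatrix, unit_inv_apply, Matrix.toBlocks₁₁, Matrix.toBlocks₂₁, Matrix.mul_apply]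

lemma hat_rr (i j : Fin n) :
    hatMatrix A (Sum.inr i) (Sum.inr j) = A (Sum.inr i) (Sum.inr j)
      - A (Sum.inr i) (Sum.inl ()) * (A (Sum.inl ()) (Sum.inl ()))⁻¹ * A (Sum.inl ()) (Sum.inr j) := by
  simp [hatMatrix, unit_inv_apply, Matrix.toBlocks₁₁, Matrix.toBlocks₂₁, Matrix.toBlocks₁₂,
    Matrix.toBlocks₂₂, Matrix.mul_apply]

lemma hat_hat (ha : A (Sum.inl ()) (Sum.inl ()) ≠ 0) : hatMatrix (hatMatrix A) = A := by
  set a := A (Sum.inl ()) (Sum.inl ()) with hadef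
  have ha' : A (Sum.inl ()) (Sum.inl ()) ≠ 0 := ha
  ext i j
  cases i with
  | inl i => cases j with
    | inl j => rw [hat_ll, hat_ll, inv_inv]
    | inr j => rw [hat_lr, hat_ll, hat_lr]; field_simp
  | inr i => cases j with
    | inl j => rw [hat_rl, hat_rl, hat_ll, inv_inv]; cases j; field_simp
    | inr j => rw [hat_rr, hat_rr, hat_rl, hat_ll, hat_lr]; field_simp; ring

lemma acc_re {κ : ℝ} (hA : StrictlyAccretive n κ A) : κ ≤ (A (Sum.inl ()) (Sum.inl ())).re := by
  have := hA (fun i => if i = Sum.inl () then 1 else 0)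
  simpa [dotProduct, Matrix.mulVec, Fintype.sum_sum_type, apply_ite] using this

lemma re_mul_conj_comm (z w : ℂ) : (z * (starRingEnd ℂ) w).re = (w * (starRingEnd ℂ) z).re := by
  simp [Complex.mul_re]; ring

lemma hat_acc {κ C : ℝ} (hκ : 0 < κ) (hC : 0 < C)
    (hA : StrictlyAccretive n κ A) (hbd : ∀ i j, ‖A i j‖ ≤ C) :
    StrictlyAccretive n (κ / (1 + (n + 1) * C ^ 2)) (hatMatrix A) := by
  have hare : κ ≤ (A (Sum.inl ()) (Sum.inl ())).re := acc_re A hA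
  set a : ℂ := A (Sum.inl ()) (Sum.inl ()) with hadef
  have ha : a ≠ 0 := by
    intro h; rw [h] at hare; simp at hare; linarith
  intro ζ
  set ξ : (Unit ⊕ Fin n) → ℂ := fun i => match i with
    | Sum.inl _ => a⁻¹ * (ζ (Sum.inl ()) - ∑ j, A (Sum.inl ()) (Sum.inr j) * ζ (Sum.inr j))
    | Sum.inr j => ζ (Sum.inr j) with hξ
  have hAl : A.mulVec ξ (Sum.inl ()) = ζ (Sum.inl ()) := by
    simp only [Matrix.mulVec, dotProduct, Fintype.sum_sum_type, Finset.univ_unique,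
      Finset.sum_singleton, hξ]
    field_simp
    show a * _ + _ = _
    ring
  have hud : (default : Unit) = () := rfl
  have hmul_l : (hatMatrix A).mulVec ζ (Sum.inl ()) = ξ (Sum.inl ()) := by
    simp only [Matrix.mulVec, dotProduct, Fintype.sum_sum_type, Finset.univ_unique,
      Finset.sum_singleton, hξ, hat_ll, hat_lr, ← hadef, hud]
    rw [mul_sub, Finset.mul_sum, sub_eq_add_neg, ← Finset.sum_neg_distrib]
    congr 1
    exact Finset.sum_congr rfl fun j _ => by ring
  have hmul_r : ∀ i, (hatMatrix A).mulVec ζ (Sum.inr i) = A.mulVec ξ (Sum.inr i) := by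
    intro i
    simp only [Matrix.mulVec, dotProduct, Fintype.sum_sum_type, Finset.univ_unique,
      Finset.sum_singleton, hξ, hat_rl, hat_rr, ← hadef, hud, sub_mul]
    rw [Finset.sum_sub_distrib]
    have h1 : ∑ x, A (Sum.inr i) (Sum.inl ()) * a⁻¹ * A (Sum.inl ()) (Sum.inr x) * ζ (Sum.inr x)
        = A (Sum.inr i) (Sum.inl ()) * a⁻¹ * ∑ x, A (Sum.inl ()) (Sum.inr x) * ζ (Sum.inr x) := by
      rw [Finset.mul_sum]
      exact Finset.sum_congr rfl fun x _ => by ring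
    rw [h1]
    ring
  have hre : ((hatMatrix A).mulVec ζ ⬝ᵥ star ζ).re = (A.mulVec ξ ⬝ᵥ star ξ).re := by
    rw [dotProduct, dotProduct, Fintype.sum_sum_type, Fintype.sum_sum_type,
      Complex.add_re, Complex.add_re, Complex.re_sum, Complex.re_sum, Complex.re_sum,
      Complex.re_sum]
    congr 1
    · simp only [Finset.univ_unique, Finset.sum_singleton, hud, Pi.star_apply]
      rw [hmul_l, ← hAl, Complex.star_def]
      exact re_mul_conj_comm _ _
    · refine Finset.sum_congr rfl fun j _ => ?_
      rw [hmul_r]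
      rfl
  have hS : (0:ℝ) ≤ ∑ i, ‖ξ i‖ ^ 2 := Finset.sum_nonneg fun i _ => by positivity
  set S : ℝ := ∑ i, ‖ξ i‖ ^ 2 with hSdef
  have hζb : ∑ i, ‖ζ i‖ ^ 2 ≤ (1 + (n + 1) * C ^ 2) * S := by
    have hz : ‖ζ (Sum.inl ())‖ ^ 2 ≤ (n + 1) * C ^ 2 * S := by
      have h1 : ‖ζ (Sum.inl ())‖ ≤ C * ∑ i, ‖ξ i‖ := by
        rw [← hAl, Matrix.mulVec, dotProduct]
        calc ‖∑ k, A (Sum.inl ()) k * ξ k‖ ≤ ∑ k, ‖A (Sum.inl ()) k * ξ k‖ :=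
              norm_sum_le _ _
          _ ≤ ∑ k, C * ‖ξ k‖ := by
              refine Finset.sum_le_sum fun k _ => ?_
              rw [norm_mul]
              exact mul_le_mul_of_nonneg_right (hbd _ _) (norm_nonneg _)
          _ = C * ∑ i, ‖ξ i‖ := by rw [Finset.mul_sum]
      have h2 : (∑ i, ‖ξ i‖) ^ 2 ≤ (n + 1) * S := by
        have h2' := sq_sum_le_card_mul_sum_sq (s := (Finset.univ : Finset (Unit ⊕ Fin n)))
          (f := fun i => ‖ξ i‖)
        rw [Finset.card_univ, Fintype.card_sum, Fintype.card_unit, Fintype.card_fin] at h2'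
        rw [hSdef]
        push_cast at h2' ⊢
        linarith
      calc ‖ζ (Sum.inl ())‖ ^ 2 ≤ (C * ∑ i, ‖ξ i‖) ^ 2 := by
            apply pow_le_pow_left₀ (norm_nonneg _) h1
        _ = C ^ 2 * (∑ i, ‖ξ i‖) ^ 2 := by ring
        _ ≤ C ^ 2 * ((n + 1) * S) := by
            exact mul_le_mul_of_nonneg_left h2 (by positivity)
        _ = (n + 1) * C ^ 2 * S := by ring
    have hrest : ∑ j : Fin n, ‖ζ (Sum.inr j)‖ ^ 2 ≤ S := by
      rw [hSdef, Fintype.sum_sum_type]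
      have : (0:ℝ) ≤ ∑ i : Unit, ‖ξ (Sum.inl i)‖ ^ 2 := Finset.sum_nonneg fun i _ => by positivity
      have heq : ∑ j : Fin n, ‖ζ (Sum.inr j)‖ ^ 2 = ∑ j : Fin n, ‖ξ (Sum.inr j)‖ ^ 2 := rfl
      linarith
    calc ∑ i, ‖ζ i‖ ^ 2 = ‖ζ (Sum.inl ())‖ ^ 2 + ∑ j : Fin n, ‖ζ (Sum.inr j)‖ ^ 2 := by
          rw [Fintype.sum_sum_type]
          simp [hud]
      _ ≤ (n + 1) * C ^ 2 * S + S := add_le_add hz hrest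
      _ = (1 + (n + 1) * C ^ 2) * S := by ring
  have hpos : (0:ℝ) < 1 + (n + 1) * C ^ 2 := by positivity
  have hmain := hA ξ
  rw [hre]
  calc κ / (1 + (n + 1) * C ^ 2) * ∑ i, ‖ζ i‖ ^ 2
      ≤ κ / (1 + (n + 1) * C ^ 2) * ((1 + (n + 1) * C ^ 2) * S) := by
        exact mul_le_mul_of_nonneg_left hζb (by positivity)
    _ = κ * S := by field_simp
    _ ≤ _ := hmain

lemma hat_bound {κ C : ℝ} (hκ : 0 < κ) (hC : 0 < C)
    (hA : StrictlyAccretive n κ A) (hbd : ∀ i j, ‖A i j‖ ≤ C) :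
    ∀ i j, ‖hatMatrix A i j‖ ≤ 1 / κ + C / κ + C + C ^ 2 / κ := by
  have hare : κ ≤ (A (Sum.inl ()) (Sum.inl ())).re := acc_re A hA
  set a : ℂ := A (Sum.inl ()) (Sum.inl ()) with hadef
  have hna : κ ≤ ‖a‖ := le_trans hare (le_trans (le_abs_self _) (Complex.abs_re_le_norm a))
  have hia : ‖a⁻¹‖ ≤ 1 / κ := by
    rw [norm_inv, one_div]
    exact inv_anti₀ hκ hna
  have hC' : C * (1 / κ) * C = C ^ 2 / κ := by ring
  intro i j
  have h1 : (0:ℝ) ≤ 1 / κ := by positivity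
  have h2 : (0:ℝ) ≤ C / κ := by positivity
  have h3 : (0:ℝ) ≤ C ^ 2 / κ := by positivity
  cases i with
  | inl i => cases j with
    | inl j =>
      rw [hat_ll]
      have := hia
      linarith
    | inr j =>
      rw [hat_lr, norm_neg, norm_mul]
      have : ‖a⁻¹‖ * ‖A (Sum.inl ()) (Sum.inr j)‖ ≤ (1 / κ) * C :=
        mul_le_mul hia (hbd _ _) (norm_nonneg _) h1
      have hq : (1 / κ) * C = C / κ := by ring
      linarith [this.trans_eq hq]
  | inr i => cases j with
    | inl j =>
      rw [hat_rl, norm_mul]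
      have : ‖A (Sum.inr i) (Sum.inl ())‖ * ‖a⁻¹‖ ≤ C * (1 / κ) :=
        mul_le_mul (hbd _ _) hia (norm_nonneg _) hC.le
      have hq : C * (1 / κ) = C / κ := by ring
      linarith [this.trans_eq hq]
    | inr j =>
      rw [hat_rr]
      calc ‖A (Sum.inr i) (Sum.inr j) - A (Sum.inr i) (Sum.inl ()) * a⁻¹ * A (Sum.inl ()) (Sum.inr j)‖
          ≤ ‖A (Sum.inr i) (Sum.inr j)‖ + ‖A (Sum.inr i) (Sum.inl ()) * a⁻¹ * A (Sum.inl ()) (Sum.inr j)‖ :=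
            norm_sub_le _ _
        _ ≤ C + C * (1 / κ) * C := by
            rw [norm_mul, norm_mul]
            refine add_le_add (hbd _ _) ?_
            refine mul_le_mul ?_ (hbd _ _) (norm_nonneg _) (by positivity)
            exact mul_le_mul (hbd _ _) hia (norm_nonneg _) hC.le
        _ = C + C ^ 2 / κ := by rw [hC']
        _ ≤ _ := by linarith



/-- The transformation `A ↦ Â` is a self-inverse bijection of the set of bounded strictly
accretive matrices onto itself, with accretivity and boundedness constants controlled by
`κ` and the bound on `A`. -/

theorem stmt16 (n : ℕ) (κ C : ℝ) (hκ : 0 < κ) (hC : 0 < C) :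
    ∃ κ' C' : ℝ, 0 < κ' ∧ 0 < C' ∧
      ∀ A : Matrix (Unit ⊕ Fin n) (Unit ⊕ Fin n) ℂ,
        StrictlyAccretive n κ A → (∀ i j, ‖A i j‖ ≤ C) →
          StrictlyAccretive n κ' (hatMatrix A) ∧
          (∀ i j, ‖hatMatrix A i j‖ ≤ C') ∧
          hatMatrix (hatMatrix A) = A := by
  refine ⟨κ / (1 + (n + 1) * C ^ 2), 1 / κ + C / κ + C + C ^ 2 / κ, by positivity, by positivity,
    fun A hA hbd => ⟨hat_acc A hκ hC hA hbd, hat_bound A hκ hC hA hbd, ?_⟩⟩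
  apply hat_hat
  have hare : κ ≤ (A (Sum.inl ()) (Sum.inl ())).re := acc_re A hA
  intro h
  rw [h] at hare
  simp at hare
  linarith
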